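/- In the ILT model, for all t > 0, vol(G_t) = 3^t · vol(G_0) + 2·n_0·(3^t − 2^t). Equivalently, the number of edges satisfies e_t = 3^t(e_0 + n_0) − 2^t n_0. -/

import Mathlib

open SimpleGraph Finset

universe u
variable {V : Type u}

/-- One step of the Iterated Local Transitivity model: every vertex `x` gets a
clone `Sum.inr x` joined to `x` and all of its neighbours; old vertices are `Sum.inl`. -/
def ILTstep (G : SimpleGraph V) : SimpleGraph (V ⊕ V) where
  Adj a b := match a, b with
    | Sum.inl x, Sum.inl y => G.Adj x y
    | Sum.inl x, Sum.inr y => x = y ∨ G.Adj x y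
    | Sum.inr x, Sum.inl y => x = y ∨ G.Adj x y
    | Sum.inr _, Sum.inr _ => False
  symm := by
    constructor
    rintro (x | x) (y | y) h
    · exact G.adj_symm h
    · exact h.imp Eq.symm (fun hh => G.adj_symm hh)
    · exact h.imp Eq.symm (fun hh => G.adj_symm hh)
    · exact h.elim
  loopless := by
    constructor
    rintro (x | x) h
    · exact G.loopless.irrefl x h
    · exact h

instance ILTstepDecAdj (G : SimpleGraph V) [DecidableEq V] [DecidableRel G.Adj] :
    DecidableRel (ILTstep G).Adj := fun a b =>
  match a, b with
  | Sum.inl x, Sum.inl y => inferInstanceAs (Decidable (G.Adj x y))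
  | Sum.inl x, Sum.inr y => inferInstanceAs (Decidable (x = y ∨ G.Adj x y))
  | Sum.inr x, Sum.inl y => inferInstanceAs (Decidable (x = y ∨ G.Adj x y))
  | Sum.inr _, Sum.inr _ => inferInstanceAs (Decidable False)

/-- The vertex set of the ILT model at time `t`. -/
def ILTV (V : Type u) : ℕ → Type u
  | 0 => V
  | t + 1 => ILTV V t ⊕ ILTV V t

/-- The graph of the ILT model at time `t`, starting from `G`. -/
def ILTG (G : SimpleGraph V) : (t : ℕ) → SimpleGraph (ILTV V t)
  | 0 => G
  | t + 1 => ILTstep (ILTG G t)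

instance ILTVFintype [Fintype V] : ∀ t, Fintype (ILTV V t)
  | 0 => inferInstanceAs (Fintype V)
  | t + 1 => letI := ILTVFintype t
             inferInstanceAs (Fintype (ILTV V t ⊕ ILTV V t))

instance ILTVDecEq [DecidableEq V] : ∀ t, DecidableEq (ILTV V t)
  | 0 => inferInstanceAs (DecidableEq V)
  | t + 1 => letI := ILTVDecEq t
             inferInstanceAs (DecidableEq (ILTV V t ⊕ ILTV V t))

instance ILTGDecAdj (G : SimpleGraph V) [DecidableEq V] [DecidableRel G.Adj] :
    ∀ t, DecidableRel (ILTG G t).Adj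
  | 0 => inferInstanceAs (DecidableRel G.Adj)
  | t + 1 => letI : DecidableEq (ILTV V t) := ILTVDecEq t
             letI : DecidableRel (ILTG G t).Adj := ILTGDecAdj G t
             ILTstepDecAdj (ILTG G t)

/-- The volume of a graph: the sum of the degrees of its vertices. -/
def graphVol [Fintype V] (G : SimpleGraph V) [DecidableRel G.Adj] : ℕ :=
  ∑ v, G.degree v

section Aux
variable [Fintype V] [DecidableEq V] (G : SimpleGraph V) [DecidableRel G.Adj]

lemma ILT_aux_card (x : V) :
    (univ.filter (fun y => x = y ∨ G.Adj x y)).card = G.degree x + 1 := by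
  have h : univ.filter (fun y => x = y ∨ G.Adj x y) = insert x (G.neighborFinset x) := by
    ext y; simp [eq_comm, adj_comm]
  rw [h, card_insert_of_notMem (by simp), card_neighborFinset_eq_degree]

lemma ILT_deg_inl (x : V) : (ILTstep G).degree (Sum.inl x) = 2 * G.degree x + 1 := by
  classical
  rw [← card_neighborFinset_eq_degree, neighborFinset_eq_filter, card_filter,
    Fintype.sum_sum_type]
  have h1 : ∑ y : V, (if (ILTstep G).Adj (Sum.inl x) (Sum.inl y) then 1 else 0)
      = G.degree x := by
    rw [← card_filter]
    simp [ILTstep, degree, neighborFinset_eq_filter]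
    congr 1
  have h2 : ∑ y : V, (if (ILTstep G).Adj (Sum.inl x) (Sum.inr y) then 1 else 0)
      = G.degree x + 1 := by
    rw [← card_filter]
    have h : ∀ y, (ILTstep G).Adj (Sum.inl x) (Sum.inr y) ↔ (x = y ∨ G.Adj x y) :=
      fun y => Iff.rfl
    simp only [h]
    exact ILT_aux_card G x
  rw [h1, h2]; ring

lemma ILT_deg_inr (x : V) : (ILTstep G).degree (Sum.inr x) = G.degree x + 1 := by
  classical
  rw [← card_neighborFinset_eq_degree, neighborFinset_eq_filter, card_filter,
    Fintype.sum_sum_type]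
  have h1 : ∑ y : V, (if (ILTstep G).Adj (Sum.inr x) (Sum.inl y) then 1 else 0)
      = G.degree x + 1 := by
    rw [← card_filter]
    have h : ∀ y, (ILTstep G).Adj (Sum.inr x) (Sum.inl y) ↔ (x = y ∨ G.Adj x y) :=
      fun y => Iff.rfl
    simp only [h]
    exact ILT_aux_card G x
  have h2 : ∑ y : V, (if (ILTstep G).Adj (Sum.inr x) (Sum.inr y) then 1 else 0) = 0 := by
    simp [ILTstep]
  rw [h1, h2]

lemma ILT_vol_step : graphVol (ILTstep G) = 3 * graphVol G + 2 * Fintype.card V := by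
  classical
  unfold graphVol
  rw [Fintype.sum_sum_type]
  simp only [ILT_deg_inl, ILT_deg_inr]
  rw [Finset.sum_add_distrib, Finset.sum_add_distrib, Finset.sum_const]
  simp only [smul_eq_mul, mul_one, ← Finset.mul_sum, card_univ]
  ring

lemma ILT_edge_step :
    (ILTstep G).edgeFinset.card = 3 * G.edgeFinset.card + Fintype.card V := by
  have h1 := SimpleGraph.sum_degrees_eq_twice_card_edges (ILTstep G)
  have h2 := SimpleGraph.sum_degrees_eq_twice_card_edges G
  have h3 := ILT_vol_step G
  unfold graphVol at h3
  omega

end Aux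

lemma ILTV_card (V : Type u) [Fintype V] (t : ℕ) :
    Fintype.card (ILTV V t) = 2 ^ t * Fintype.card V := by
  induction t with
  | zero =>
    simp [ILTV]
    rfl
  | succ t ih =>
    have h : Fintype.card (ILTV V (t + 1)) = Fintype.card (ILTV V t ⊕ ILTV V t) :=
      Fintype.card_congr (Equiv.refl _)
    rw [h, Fintype.card_sum, ih]
    ring

lemma ILT_edge_formula [Fintype V] [DecidableEq V]
    (G : SimpleGraph V) [DecidableRel G.Adj] (t : ℕ) :
    (ILTG G t).edgeFinset.card
      = 3 ^ t * (G.edgeFinset.card + Fintype.card V) - 2 ^ t * Fintype.card V := by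
  induction t with
  | zero =>
    simp [ILTG, ILTV]
    congr 1
  | succ t ih =>
    have hstep : (ILTG G (t + 1)).edgeFinset.card
        = 3 * (ILTG G t).edgeFinset.card + Fintype.card (ILTV V t) := by
      letI : Fintype (ILTV V t) := ILTVFintype t
      letI : DecidableEq (ILTV V t) := ILTVDecEq t
      letI : DecidableRel (ILTG G t).Adj := ILTGDecAdj G t
      exact ILT_edge_step (ILTG G t)
    have hle : 2 ^ t * Fintype.card V ≤ 3 ^ t * (G.edgeFinset.card + Fintype.card V) :=
      Nat.mul_le_mul (Nat.pow_le_pow_left (by norm_num) t) (Nat.le_add_left _ _)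
    have hle' : 2 ^ (t + 1) * Fintype.card V
        ≤ 3 ^ (t + 1) * (G.edgeFinset.card + Fintype.card V) :=
      Nat.mul_le_mul (Nat.pow_le_pow_left (by norm_num) _) (Nat.le_add_left _ _)
    rw [hstep, ih, ILTV_card]
    zify [hle, hle']
    push_cast [pow_succ]
    ring

/-- The Wiener index: the sum of distances over unordered pairs of vertices. -/
noncomputable def wienerIndex [Fintype V] (G : SimpleGraph V) : ℕ :=
  (∑ x : V, ∑ y : V, G.dist x y) / 2

theorem ILT_volume_formula [Fintype V] [DecidableEq V]
    (G : SimpleGraph V) [DecidableRel G.Adj] (t : ℕ) (ht : 0 < t) :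
    graphVol (ILTG G t) = 3 ^ t * graphVol G + 2 * Fintype.card V * (3 ^ t - 2 ^ t) ∧
    (ILTG G t).edgeFinset.card
      = 3 ^ t * (G.edgeFinset.card + Fintype.card V) - 2 ^ t * Fintype.card V := by
  have he := ILT_edge_formula G t
  have hvol : graphVol (ILTG G t) = 2 * (ILTG G t).edgeFinset.card :=
    SimpleGraph.sum_degrees_eq_twice_card_edges (ILTG G t)
  have hle : 2 ^ t * Fintype.card V ≤ 3 ^ t * (G.edgeFinset.card + Fintype.card V) :=
    Nat.mul_le_mul (Nat.pow_le_pow_left (by norm_num) t) (Nat.le_add_left _ _)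
  have hle2 : (2:ℕ) ^ t ≤ 3 ^ t := Nat.pow_le_pow_left (by norm_num) t
  have hvol0 : graphVol G = 2 * G.edgeFinset.card :=
    SimpleGraph.sum_degrees_eq_twice_card_edges G
  refine ⟨?_, he⟩
  rw [hvol, he, hvol0]
  zify [hle, hle2]
  ring
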